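/- If the Lagrangian density L(X, φ, φ̇, F, G, g) depends on F and g only through the right Cauchy–Green tensor C = Fᵀ g F (i.e., C_{AB} = F^a{}_A g_{ab} F^b{}_B), then the Doyle–Ericksen-type identity 2 ∂L/∂g_{ab} = g^{bc} (∂L/∂F^c{}_A) F^a{}_A holds (for the part of L not depending on φ̇). -/
import Mathlib

namespace Stmt17Aux

variable {n : ℕ}

abbrev X (n : ℕ) := Fin n → Fin n → ℝ

noncomputable def Q2 (g F1 : X n) : X n →ₗ[ℝ] X n where
  toFun F2 := fun A B => ∑ a', ∑ b', F1 a' A * g a' b' * F2 b' B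
  map_add' x y := by
    funext A B
    simp [mul_add, Finset.sum_add_distrib]
  map_smul' c x := by
    funext A B
    simp [Finset.mul_sum, mul_comm, mul_left_comm, mul_assoc]

noncomputable def Q1 (g : X n) : X n →ₗ[ℝ] X n →L[ℝ] X n where
  toFun F1 := (Q2 g F1).toContinuousLinearMap
  map_add' x y := by
    ext F2 A B
    simp [Q2, add_mul, Finset.sum_add_distrib]
  map_smul' c x := by
    ext F2 A B
    simp [Q2, Finset.mul_sum, mul_comm, mul_left_comm, mul_assoc]

noncomputable def Qc (g : X n) : X n →L[ℝ] X n →L[ℝ] X n :=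
  (Q1 g).toContinuousLinearMap

@[simp] lemma Qc_apply (g F1 F2 : X n) :
    Qc g F1 F2 = fun A B => ∑ a', ∑ b', F1 a' A * g a' b' * F2 b' B := by
  simp [Qc, Q1, Q2]

noncomputable def Lg (F : X n) : X n →ₗ[ℝ] X n where
  toFun g' := fun A B => ∑ a', ∑ b', F a' A * g' a' b' * F b' B
  map_add' x y := by
    funext A B
    simp [mul_add, add_mul, Finset.sum_add_distrib]
  map_smul' c x := by
    funext A B
    simp [Finset.mul_sum, mul_comm, mul_left_comm, mul_assoc]

noncomputable def Lgc (F : X n) : X n →L[ℝ] X n := (Lg F).toContinuousLinearMap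

@[simp] lemma Lgc_apply (F g' : X n) :
    Lgc F g' = fun A B => ∑ a', ∑ b', F a' A * g' a' b' * F b' B := by
  simp [Lgc, Lg]

noncomputable def Psi (g F : X n) : X n →L[ℝ] X n :=
  (((Qc g).isBoundedBilinearMap).deriv (F, F)).comp
    ((ContinuousLinearMap.id ℝ (X n)).prod (ContinuousLinearMap.id ℝ (X n)))

lemma Psi_apply (g F E : X n) : Psi g F E = Qc g F E + Qc g E F := by
  simp [Psi, IsBoundedBilinearMap.deriv_apply]

lemma hasFDerivAt_quad (g F : X n) :
    HasFDerivAt (fun F' : X n => Qc g F' F') (Psi g F) F := by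
  have h := ((Qc g).isBoundedBilinearMap).hasFDerivAt (F, F)
  have hd : HasFDerivAt (fun F' : X n => (F', F'))
      ((ContinuousLinearMap.id ℝ (X n)).prod (ContinuousLinearMap.id ℝ (X n))) F :=
    ((ContinuousLinearMap.id ℝ (X n)).prod (ContinuousLinearMap.id ℝ (X n))).hasFDerivAt
  have hcomp : HasFDerivAt
      ((fun p : X n × X n => Qc g p.1 p.2) ∘ (fun F' : X n => (F', F'))) (Psi g F) F :=
    HasFDerivAt.comp (f := fun F' : X n => (F', F')) F h hd
  exact hcomp

end Stmt17Aux

open Stmt17Aux in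
/-- If the Lagrangian density depends on `F` and `g` only through
`C = Fᵀ g F` (i.e. `L(F,g) = L̂(C)` with `C_{AB} = F^a{}_A g_{ab} F^b{}_B`), then the
Doyle–Ericksen-type identity `2 ∂L/∂g_{ab} = g^{bc} (∂L/∂F^c{}_A) F^a{}_A` holds. -/
theorem stmt17 {n : ℕ}
    (Lhat : (Fin n → Fin n → ℝ) → ℝ) (hL : Differentiable ℝ Lhat)
    (F g ginv : Fin n → Fin n → ℝ)
    (hgsym : ∀ i j, g i j = g j i)
    (hginv : ∀ i j, (∑ k, g i k * ginv k j) = if i = j then (1 : ℝ) else 0)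
    -- the derivative of L̂ at C = Fᵀ g F is a symmetric functional (C is symmetric)
    (hsym : ∀ M : Fin n → Fin n → ℝ,
      fderiv ℝ Lhat (fun A B => ∑ a, ∑ b, F a A * g a b * F b B) M
        = fderiv ℝ Lhat (fun A B => ∑ a, ∑ b, F a A * g a b * F b B)
            (fun i j => M j i)) :
    ∀ a b : Fin n,
      2 * fderiv ℝ (fun g' => Lhat (fun A B => ∑ a', ∑ b', F a' A * g' a' b' * F b' B))
            g (Pi.single a (Pi.single b 1))
        = ∑ c, ginv b c * ∑ A,
            (fderiv ℝ (fun F' => Lhat (fun A' B' => ∑ a', ∑ b', F' a' A' * g a' b' * F' b' B'))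
              F (Pi.single c (Pi.single A 1))) * F a A := by
  intro a b
  classical
  set C : X n := fun A B => ∑ a', ∑ b', F a' A * g a' b' * F b' B with hCdef
  set D := fderiv ℝ Lhat C with hDdef
  have hLC : HasFDerivAt Lhat D C := (hL C).hasFDerivAt
  -- inverse from the other side
  have hginv' : ∀ i j, (∑ k, ginv i k * g k j) = if i = j then (1 : ℝ) else 0 := by
    have hM : (Matrix.of g) * (Matrix.of ginv) = 1 := by
      ext i j
      simpa [Matrix.mul_apply, Matrix.one_apply] using hginv i j
    have hM' : (Matrix.of ginv) * (Matrix.of g) = 1 := mul_eq_one_comm.mp hM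
    intro i j
    have := Matrix.ext_iff.mpr hM' i j
    simpa [Matrix.mul_apply, Matrix.one_apply] using this
  have key1 : ∀ a' : Fin n, (∑ c, ginv b c * g a' c) = if b = a' then (1:ℝ) else 0 := by
    intro a'
    have := hginv' b a'
    calc ∑ c, ginv b c * g a' c = ∑ c, ginv b c * g c a' := by
          exact Finset.sum_congr rfl fun c _ => by rw [hgsym a' c]
      _ = if b = a' then 1 else 0 := hginv' b a'
  -- LHS: derivative in g
  have hLgfun : (fun g' : X n => Lhat (fun A B => ∑ a', ∑ b', F a' A * g' a' b' * F b' B))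
      = fun g' => Lhat (Lgc F g') := by
    funext g'; simp
  have hLgC : Lgc F g = C := by
    funext A B; simp [hCdef]
  have hLHS : fderiv ℝ (fun g' : X n => Lhat (fun A B => ∑ a', ∑ b', F a' A * g' a' b' * F b' B)) g
      = D.comp (Lgc F) := by
    rw [hLgfun]
    have h2 : HasFDerivAt Lhat D (Lgc F g) := hLgC ▸ hLC
    exact (h2.comp g (Lgc F).hasFDerivAt).fderiv
  -- RHS: derivative in F
  have hFfun : (fun F' : X n => Lhat (fun A' B' => ∑ a', ∑ b', F' a' A' * g a' b' * F' b' B'))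
      = fun F' => Lhat (Qc g F' F') := by
    funext F'; simp
  have hQFF : Qc g F F = C := by
    funext A B; simp [hCdef]
  have hRHS : fderiv ℝ (fun F' : X n => Lhat (fun A' B' => ∑ a', ∑ b', F' a' A' * g a' b' * F' b' B')) F
      = D.comp (Psi g F) := by
    rw [hFfun]
    have h2 : HasFDerivAt Lhat D (Qc g F F) := hQFF ▸ hLC
    exact (HasFDerivAt.comp (g := Lhat) (f := fun F' : X n => Qc g F' F') F h2
      (hasFDerivAt_quad g F)).fderiv
  rw [hLHS, hRHS]
  -- evaluate the linear maps
  have hLg_single : Lgc F (Pi.single a (Pi.single b 1)) = fun A B => F a A * F b B := by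
    funext A B
    simp [Pi.single_apply, ite_apply, Pi.zero_apply, mul_ite, ite_mul, mul_zero, zero_mul,
      Finset.sum_ite_eq', mul_one]
  have hQ1 : ∀ c A, Qc g F (Pi.single c (Pi.single A 1))
      = fun A' B' => (if B' = A then ∑ a', F a' A' * g a' c else 0) := by
    intro c A; funext A' B'
    by_cases hBA : B' = A <;>
      simp [Qc_apply, Pi.single_apply, ite_apply, Pi.zero_apply, hBA, mul_ite, ite_mul,
        mul_zero, zero_mul, Finset.sum_ite_eq', mul_one]
  have hQ2 : ∀ c A, Qc g (Pi.single c (Pi.single A 1)) F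
      = fun A' B' => (if A' = A then ∑ b', g c b' * F b' B' else 0) := by
    intro c A; funext A' B'
    by_cases hAA : A' = A <;>
      simp [Qc_apply, Pi.single_apply, ite_apply, Pi.zero_apply, hAA, mul_ite, ite_mul,
        mul_zero, zero_mul, Finset.sum_ite_eq, Finset.sum_ite_eq', mul_one]
  -- rewrite RHS sum into a single application of D
  have hsum : (∑ c, ginv b c * ∑ A, (D.comp (Psi g F)) (Pi.single c (Pi.single A 1)) * F a A)
      = D (∑ c, ∑ A, (ginv b c * F a A) •
          (Qc g F (Pi.single c (Pi.single A 1)) + Qc g (Pi.single c (Pi.single A 1)) F)) := by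
    rw [map_sum]
    apply Finset.sum_congr rfl
    intro c _
    rw [map_sum, Finset.mul_sum]
    apply Finset.sum_congr rfl
    intro A _
    rw [map_smul, smul_eq_mul, ContinuousLinearMap.comp_apply, Psi_apply]
    ring
  rw [hsum]
  -- compute the big tensor
  have hT : (∑ c, ∑ A, (ginv b c * F a A) •
        (Qc g F (Pi.single c (Pi.single A 1)) + Qc g (Pi.single c (Pi.single A 1)) F))
      = (fun A' B' => F a A' * F b B') + (fun A' B' => F b A' * F a B') := by
    funext A' B'
    simp only [hQ1, hQ2, Finset.sum_apply, Pi.add_apply, Pi.smul_apply, smul_eq_mul]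
    have inner : ∀ c : Fin n,
        (∑ A, ginv b c * F a A *
          ((if B' = A then ∑ a', F a' A' * g a' c else 0)
            + (if A' = A then ∑ b', g c b' * F b' B' else 0)))
        = ginv b c * F a B' * (∑ a', F a' A' * g a' c)
          + ginv b c * F a A' * (∑ b', g c b' * F b' B') := by
      intro c
      simp [mul_add, Finset.sum_add_distrib, mul_ite, mul_zero, Finset.sum_ite_eq]
    rw [Finset.sum_congr rfl fun c _ => inner c, Finset.sum_add_distrib]
    have e1 : (∑ c, ginv b c * F a B' * (∑ a', F a' A' * g a' c)) = F b A' * F a B' := by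
      calc (∑ c, ginv b c * F a B' * (∑ a', F a' A' * g a' c))
          = ∑ a', F a' A' * F a B' * (∑ c, ginv b c * g a' c) := by
            simp_rw [Finset.mul_sum]
            rw [Finset.sum_comm]
            exact Finset.sum_congr rfl fun _ _ => Finset.sum_congr rfl fun _ _ => by ring
        _ = ∑ a', F a' A' * F a B' * (if b = a' then 1 else 0) := by
            exact Finset.sum_congr rfl fun a' _ => by rw [key1]
        _ = F b A' * F a B' := by
            simp [mul_ite, mul_zero, mul_one, Finset.sum_ite_eq]
    have e2 : (∑ c, ginv b c * F a A' * (∑ b', g c b' * F b' B')) = F a A' * F b B' := by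
      calc (∑ c, ginv b c * F a A' * (∑ b', g c b' * F b' B'))
          = ∑ b'', F b'' B' * F a A' * (∑ c, ginv b c * g c b'') := by
            simp_rw [Finset.mul_sum]
            rw [Finset.sum_comm]
            exact Finset.sum_congr rfl fun _ _ => Finset.sum_congr rfl fun _ _ => by ring
        _ = ∑ b'', F b'' B' * F a A' * (if b = b'' then 1 else 0) := by
            exact Finset.sum_congr rfl fun b'' _ => by rw [hginv']
        _ = F a A' * F b B' := by
            simp [mul_ite, mul_zero, mul_one, Finset.sum_ite_eq]
            ring
    rw [e1, e2]
    ring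
  rw [hT, map_add]
  have hswap : D (fun A' B' => F b A' * F a B') = D (fun A' B' => F a A' * F b B') := by
    rw [hsym (fun A' B' => F b A' * F a B')]
    congr 1
    funext i j
    ring
  rw [hswap, ContinuousLinearMap.comp_apply, hLg_single]
  ring
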